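/- For the (1,4) spectral curve, define the free energies: F_0(λ,t) = −t⁶/972 + 2λt³/27 − 3λ²/4 + (λ²/4)·log(3λ²), F_1(λ) = −(1/12)·log λ, and for g ≥ 2, F_g(λ) = (B_{2g}/(2g(2g−2)))·λ^{2−2g}, regarded as real-analytic functions of λ > 0 (t ∈ ℝ a parameter); here B_n denotes the n-th Bernoulli number, defined by w/(e^w − 1) = ∑_{n≥0} B_n·w^n/n!, and B_n(X) denotes the n-th Bernoulli polynomial, defined by w·e^{Xw}/(e^w − 1) = ∑_{n≥0} B_n(X)·w^n/n!. Fix ν ∈ ℝ and define V_{−1}(λ) = F_0'(λ), V_0(λ) = −((2ν−1)/2)·F_0''(λ), and V_m(λ) = (B_{m+1}(ν)/(m(m+1)))·λ^{−m} for m ≥ 1. Then for all t ∈ ℝ and λ > 0: (i) ∑ ((ν^n − (ν−1)^n)/n!)·V_m^{(n)}(λ) = (1/2)·log(3λ²), the sum being over all pairs (m, n) with m ≥ −1, n ≥ 0, and m + n = 0; and (ii) for every integer k ≥ 1, ∑ ((ν^n − (ν−1)^n)/n!)·V_m^{(n)}(λ) = 0, the sum being over all pairs (m, n) with m ≥ −1,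 n ≥ 0, and m + n = k. Equivalently, the formal Laurent series V_reg(λ; ħ) = ∑_{m≥−1} ħ^m·V_m(λ) satisfies e^{(ν−1)ħ∂_λ}(e^{ħ∂_λ} − 1)·V_reg = (1/2)·log(3λ²) upon Taylor expansion in ħ. -/

import Mathlib

/-- The genus-zero free energy `F₀(λ,t)` of the (1,4) spectral curve. -/
noncomputable def F0 (t : ℝ) : ℝ → ℝ :=
  fun l => -t ^ 6 / 972 + 2 * l * t ^ 3 / 27 - 3 * l ^ 2 / 4
    + l ^ 2 / 4 * Real.log (3 * l ^ 2)

/-- The coefficients `V_m` (for `m ≥ −1`, reindexed by `j = m + 1 : ℕ`) of the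
regularized Voros coefficient of the quantum (1,4) curve:
`V₋₁ = F₀'`, `V₀(λ) = −((2ν−1)/2)·F₀''(λ)`, and
`V_m(λ) = (B_{m+1}(ν)/(m(m+1)))·λ^{−m}` for `m ≥ 1`, where `B_n(X)` is the `n`-th
Bernoulli polynomial. -/
noncomputable def V14 (t ν : ℝ) : ℕ → ℝ → ℝ
  | 0 => deriv (F0 t)
  | 1 => fun l => -((2 * ν - 1) / 2) * deriv (deriv (F0 t)) l
  | (m + 2) => fun l =>
      (Polynomial.aeval ν (Polynomial.bernoulli (m + 2)) : ℝ)
          / (((m : ℝ) + 1) * ((m : ℝ) + 2)) * l ^ (-((m : ℤ) + 1))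

/- ### Auxiliary derivative computations -/

lemma hasDerivAt_log3sq {x : ℝ} (hx : x ≠ 0) :
    HasDerivAt (fun y : ℝ => Real.log (3 * y ^ 2)) (2 / x) x := by
  have h1 : HasDerivAt (fun y : ℝ => 3 * y ^ 2) (3 * ((2 : ℕ) * x ^ (2 - 1))) x :=
    (hasDerivAt_pow 2 x).const_mul 3
  have hne : (3 : ℝ) * x ^ 2 ≠ 0 := mul_ne_zero (by norm_num) (pow_ne_zero 2 hx)
  have h2 : HasDerivAt (fun y : ℝ => Real.log (3 * y ^ 2))
      ((3 * x ^ 2)⁻¹ * (3 * ((2 : ℕ) * x ^ (2 - 1)))) x :=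
    (Real.hasDerivAt_log hne).comp (h₂ := Real.log) x h1
  convert h2 using 1
  push_cast
  field_simp

lemma hasDerivAt_F0 (t : ℝ) {x : ℝ} (hx : x ≠ 0) :
    HasDerivAt (F0 t) (2 * t ^ 3 / 27 - x + x / 2 * Real.log (3 * x ^ 2)) x := by
  have hF : F0 t = fun y : ℝ =>
      -t ^ 6 / 972 + ((2 * t ^ 3 / 27) * y - 3 / 4 * y ^ 2
        + y ^ 2 / 4 * Real.log (3 * y ^ 2)) := by
    funext y
    simp only [F0]
    ring
  have hp : HasDerivAt (fun y : ℝ => y ^ 2 / 4) (((2 : ℕ) * x ^ (2 - 1)) / 4) x :=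
    (hasDerivAt_pow 2 x).div_const 4
  have H := ((((hasDerivAt_id x).const_mul (2 * t ^ 3 / 27)).sub
      ((hasDerivAt_pow 2 x).const_mul (3 / 4))).add
      (hp.mul (hasDerivAt_log3sq hx))).const_add (-t ^ 6 / 972)
  rw [hF]
  refine H.congr_deriv ?_
  push_cast
  field_simp
  ring

lemma hasDerivAt_G1 (t : ℝ) {x : ℝ} (hx : x ≠ 0) :
    HasDerivAt (fun y : ℝ => 2 * t ^ 3 / 27 - y + y / 2 * Real.log (3 * y ^ 2))
      ((1 / 2) * Real.log (3 * x ^ 2)) x := by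
  have H := (((hasDerivAt_id x).const_sub (2 * t ^ 3 / 27)).add
      (((hasDerivAt_id x).div_const 2).mul (hasDerivAt_log3sq hx)))
  refine H.congr_deriv ?_
  simp only [id_eq]
  field_simp
  try ring

lemma derivF0_eq (t : ℝ) {x : ℝ} (hx : x ≠ 0) :
    deriv (F0 t) x = 2 * t ^ 3 / 27 - x + x / 2 * Real.log (3 * x ^ 2) :=
  (hasDerivAt_F0 t hx).deriv

lemma derivderivF0_eq (t : ℝ) {x : ℝ} (hx : x ≠ 0) :
    deriv (deriv (F0 t)) x = (1 / 2) * Real.log (3 * x ^ 2) := by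
  have h : deriv (F0 t) =ᶠ[nhds x]
      fun y : ℝ => 2 * t ^ 3 / 27 - y + y / 2 * Real.log (3 * y ^ 2) := by
    filter_upwards [eventually_ne_nhds hx] with y hy using derivF0_eq t hy
  rw [h.deriv_eq]
  exact (hasDerivAt_G1 t hx).deriv

lemma iter_deriv_const_mul (c : ℝ) :
    ∀ (n : ℕ) (f : ℝ → ℝ) (x : ℝ),
      deriv^[n] (fun y => c * f y) x = c * deriv^[n] f x := by
  intro n
  induction n with
  | zero => intro f x; simp
  | succ n ih =>
      intro f x
      rw [Function.iterate_succ_apply, Function.iterate_succ_apply]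
      have h : deriv (fun y => c * f y) = fun y => c * deriv f y := by
        funext y
        exact deriv_const_mul_field c
      rw [h, ih]

lemma prodDesc' (M : ℕ) :
    ∀ n : ℕ, (∏ i ∈ Finset.range n, (-1 - (M : ℝ) - (i : ℝ))) * (M.factorial : ℝ)
      = (-1) ^ n * (((M + n).factorial : ℝ)) := by
  intro n
  induction n with
  | zero => simp
  | succ n ih =>
      rw [Finset.prod_range_succ, show M + (n + 1) = (M + n) + 1 by ring,
        Nat.factorial_succ]
      push_cast
      push_cast at ih
      linear_combination (-1 - (M : ℝ) - (n : ℝ)) * ih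

lemma iter_log (c : ℝ) {l : ℝ} (hl : 0 < l) (n : ℕ) :
    iteratedDeriv (n + 1) (fun y : ℝ => c * ((1 / 2) * Real.log (3 * y ^ 2))) l
      = c * ((-1) ^ n * (n.factorial : ℝ) * l ^ (-1 - (n : ℤ))) := by
  have hev : (fun y : ℝ => c * ((1 / 2) * Real.log (3 * y ^ 2))) =ᶠ[nhds l]
      fun y : ℝ => c * ((1 / 2) * Real.log 3) + c * Real.log y := by
    filter_upwards [eventually_gt_nhds hl] with y hy
    rw [Real.log_mul (by norm_num) (pow_ne_zero 2 hy.ne'), Real.log_pow]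
    push_cast
    ring
  rw [hev.iteratedDeriv_eq (n + 1), iteratedDeriv_eq_iterate,
    Function.iterate_succ_apply]
  have hd : deriv (fun y : ℝ => c * ((1 / 2) * Real.log 3) + c * Real.log y)
      = fun y : ℝ => c * y⁻¹ := by
    funext y
    rw [deriv_const_add, deriv_const_mul_field, Real.deriv_log]
  rw [hd, iter_deriv_const_mul c n Inv.inv l, iter_deriv_inv]

/- ### The Bernoulli-polynomial identity from the generating function -/

open PowerSeries in
lemma coreB (ν : ℝ) (K : ℕ) (hK : 2 ≤ K) :
    ∑ p ∈ Finset.HasAntidiagonal.antidiagonal K,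
      ((Polynomial.aeval ν (Polynomial.bernoulli p.1) : ℝ) / (p.1.factorial : ℝ)) *
        (((-ν) ^ p.2 - (1 - ν) ^ p.2) / (p.2.factorial : ℝ)) = 0 := by
  have h1 := Polynomial.bernoulli_generating_function (A := ℝ) ν
  have h2 : rescale (1 - ν) (exp ℝ) = rescale (-ν) (exp ℝ) * exp ℝ := by
    have h := exp_mul_exp_eq_exp_add (-ν) (1 : ℝ)
    rw [rescale_one] at h
    rw [show (1 : ℝ) - ν = -ν + 1 by ring, ← h]
    rfl
  have h3 : rescale (-ν) (exp ℝ) * rescale ν (exp ℝ) = 1 := by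
    rw [exp_mul_exp_eq_exp_add, show -ν + ν = 0 by ring, rescale_zero]
    simp
  have key : (PowerSeries.mk fun n =>
        (Polynomial.aeval ν ((1 / n.factorial : ℚ) • Polynomial.bernoulli n) : ℝ)) *
      (rescale (-ν) (exp ℝ) - rescale (1 - ν) (exp ℝ)) = -(PowerSeries.X) := by
    calc (PowerSeries.mk fun n =>
            (Polynomial.aeval ν ((1 / n.factorial : ℚ) • Polynomial.bernoulli n) : ℝ)) *
          (rescale (-ν) (exp ℝ) - rescale (1 - ν) (exp ℝ))
        = -(rescale (-ν) (exp ℝ)) * ((PowerSeries.mk fun n =>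
            (Polynomial.aeval ν ((1 / n.factorial : ℚ) • Polynomial.bernoulli n) : ℝ)) *
            (exp ℝ - 1)) := by rw [h2]; ring
      _ = -(rescale (-ν) (exp ℝ)) * (PowerSeries.X * rescale ν (exp ℝ)) := by rw [h1]
      _ = -(PowerSeries.X) * (rescale (-ν) (exp ℝ) * rescale ν (exp ℝ)) := by ring
      _ = -(PowerSeries.X) := by rw [h3]; ring
  have hco := congrArg (PowerSeries.coeff K) key
  rw [PowerSeries.coeff_mul, map_neg, PowerSeries.coeff_X,
    if_neg (by omega : ¬ K = 1), neg_zero] at hco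
  rw [← hco]
  apply Finset.sum_congr rfl
  intro p _
  rw [PowerSeries.coeff_mk, map_sub, PowerSeries.coeff_rescale, PowerSeries.coeff_rescale,
    PowerSeries.coeff_exp]
  rw [map_smul, Rat.smul_def]
  have hq : ∀ q : ℚ, (algebraMap ℚ ℝ) q = (q : ℝ) := fun q => by
    simp [eq_ratCast]
  rw [hq]
  push_cast
  ring

/- ### Uniform formula for the iterated derivatives -/

lemma iterV (t ν l : ℝ) (hl : 0 < l) (k : ℕ) (hk : 1 ≤ k) :
    ∀ j n : ℕ, j + n = k + 1 →
    iteratedDeriv n (V14 t ν j) l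
      = (-1) ^ n * (((k - 1).factorial : ℝ))
          * ((Polynomial.aeval ν (Polynomial.bernoulli j) : ℝ) / (j.factorial : ℝ))
          * l ^ (-(k : ℤ)) := by
  obtain ⟨k', rfl⟩ : ∃ k', k = k' + 1 := ⟨k - 1, by omega⟩
  intro j n hjn
  match j with
  | 0 =>
      have hn : n = k' + 2 := by omega
      subst hn
      have hev1 : V14 t ν 0 =ᶠ[nhds l]
          (fun y : ℝ => 2 * t ^ 3 / 27 - y + y / 2 * Real.log (3 * y ^ 2)) := by
        filter_upwards [eventually_ne_nhds hl.ne'] with y hy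
        exact derivF0_eq t hy
      rw [hev1.iteratedDeriv_eq (k' + 2), iteratedDeriv_succ']
      have hev2 : deriv (fun y : ℝ => 2 * t ^ 3 / 27 - y + y / 2 * Real.log (3 * y ^ 2))
          =ᶠ[nhds l] (fun y : ℝ => (1 : ℝ) * ((1 / 2) * Real.log (3 * y ^ 2))) := by
        filter_upwards [eventually_ne_nhds hl.ne'] with y hy
        rw [(hasDerivAt_G1 t hy).deriv]
        ring
      rw [hev2.iteratedDeriv_eq (k' + 1), iter_log 1 hl k']
      rw [show (-1 - (k' : ℤ)) = -((k' : ℕ) + 1 : ℕ) by push_cast; ring]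
      simp only [Polynomial.bernoulli_zero, map_one, Nat.add_sub_cancel,
        Nat.factorial_zero]
      push_cast
      ring
  | 1 =>
      have hn : n = k' + 1 := by omega
      subst hn
      have hev : V14 t ν 1 =ᶠ[nhds l]
          (fun y : ℝ => (-((2 * ν - 1) / 2)) * ((1 / 2) * Real.log (3 * y ^ 2))) := by
        filter_upwards [eventually_ne_nhds hl.ne'] with y hy
        show -((2 * ν - 1) / 2) * deriv (deriv (F0 t)) y = _
        rw [derivderivF0_eq t hy]
      rw [hev.iteratedDeriv_eq (k' + 1), iter_log _ hl k']
      rw [show (-1 - (k' : ℤ)) = -((k' : ℕ) + 1 : ℕ) by push_cast; ring]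
      have hb : (Polynomial.aeval ν (Polynomial.bernoulli 1) : ℝ) = ν - 1 / 2 := by
        simp [Polynomial.bernoulli, Finset.sum_range_succ]
        ring
      rw [hb]
      simp only [Nat.add_sub_cancel, Nat.factorial_one]
      push_cast
      ring
  | (m + 2) =>
      have hk' : k' = m + n := by omega
      subst hk'
      have hV : iteratedDeriv n (V14 t ν (m + 2)) l
          = (Polynomial.aeval ν (Polynomial.bernoulli (m + 2)) : ℝ)
              / (((m : ℝ) + 1) * ((m : ℝ) + 2))
            * ((∏ i ∈ Finset.range n, (((-((m : ℤ) + 1) : ℤ) : ℝ) - (i : ℝ)))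
              * l ^ ((-((m : ℤ) + 1)) - (n : ℕ))) := by
        rw [iteratedDeriv_eq_iterate]
        rw [show V14 t ν (m + 2) = fun x : ℝ =>
            (Polynomial.aeval ν (Polynomial.bernoulli (m + 2)) : ℝ)
              / (((m : ℝ) + 1) * ((m : ℝ) + 2)) * x ^ (-((m : ℤ) + 1)) from rfl]
        rw [iter_deriv_const_mul _ n (fun x : ℝ => x ^ (-((m : ℤ) + 1))) l,
          iter_deriv_zpow]
      rw [hV]
      have hprod : (∏ i ∈ Finset.range n, (((-((m : ℤ) + 1) : ℤ) : ℝ) - (i : ℝ)))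
          = (-1) ^ n * (((m + n).factorial : ℝ) / (m.factorial : ℝ)) := by
        have h := prodDesc' m n
        have hm : (m.factorial : ℝ) ≠ 0 := Nat.cast_ne_zero.mpr (Nat.factorial_ne_zero m)
        have : (∏ i ∈ Finset.range n, (-1 - (m : ℝ) - (i : ℝ)))
            = (-1) ^ n * (((m + n).factorial : ℝ) / (m.factorial : ℝ)) := by
          field_simp
          linarith [h]
        rw [← this]
        apply Finset.prod_congr rfl
        intro i _
        push_cast
        ring
      rw [hprod]
      rw [show (-((m : ℤ) + 1)) - (n : ℕ) = -(((m + n + 1 : ℕ)) : ℤ) by push_cast; ring]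
      simp only [Nat.add_sub_cancel]
      have hfac : (((m + 2).factorial : ℝ)) = ((m : ℝ) + 2) * ((m : ℝ) + 1) * (m.factorial : ℝ) := by
        rw [Nat.factorial_succ, Nat.factorial_succ]
        push_cast
        ring
      rw [hfac]
      have h1 : ((m : ℝ) + 1) ≠ 0 := by positivity
      have h2 : ((m : ℝ) + 2) ≠ 0 := by positivity
      have hm : (m.factorial : ℝ) ≠ 0 := Nat.cast_ne_zero.mpr (Nat.factorial_ne_zero m)
      field_simp

/-- For all `t ∈ ℝ`, `λ > 0` and `ν ∈ ℝ`:
(i) `∑_{(m,n) : m ≥ −1, n ≥ 0, m+n=0} ((νⁿ − (ν−1)ⁿ)/n!)·V_m⁽ⁿ⁾(λ) = (1/2)·log(3λ²)`;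
(ii) for every `k ≥ 1`,
`∑_{(m,n) : m ≥ −1, n ≥ 0, m+n=k} ((νⁿ − (ν−1)ⁿ)/n!)·V_m⁽ⁿ⁾(λ) = 0`.
(Here `m` is reindexed as `j = m + 1 ∈ ℕ`, so the sums run over the antidiagonal
`j + n = k + 1`.)  Equivalently, `V_reg(λ;ℏ) = ∑_{m≥−1} ℏᵐ V_m(λ)` satisfies
`e^{(ν−1)ℏ∂}(e^{ℏ∂} − 1)·V_reg = (1/2)·log(3λ²)` upon Taylor expansion in `ℏ`. -/
theorem voros_difference_equation_14 (t l ν : ℝ) (hl : 0 < l) :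
    (∑ p ∈ Finset.HasAntidiagonal.antidiagonal 1,
        ((ν ^ p.2 - (ν - 1) ^ p.2) / (p.2.factorial : ℝ))
          * iteratedDeriv p.2 (V14 t ν p.1) l
      = (1 / 2) * Real.log (3 * l ^ 2))
    ∧ ∀ k : ℕ, 1 ≤ k →
        ∑ p ∈ Finset.HasAntidiagonal.antidiagonal (k + 1),
          ((ν ^ p.2 - (ν - 1) ^ p.2) / (p.2.factorial : ℝ))
            * iteratedDeriv p.2 (V14 t ν p.1) l = 0 := by
  constructor
  · rw [Finset.Nat.sum_antidiagonal_eq_sum_range_succ_mk]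
    rw [Finset.sum_range_succ, Finset.sum_range_succ, Finset.sum_range_zero]
    have h2 : iteratedDeriv 1 (V14 t ν 0) l = (1 / 2) * Real.log (3 * l ^ 2) := by
      rw [iteratedDeriv_one]
      exact derivderivF0_eq t hl.ne'
    norm_num
    exact derivderivF0_eq t hl.ne'
  · intro k hk
    have h0 : ∀ p ∈ Finset.HasAntidiagonal.antidiagonal (k + 1),
        ((ν ^ p.2 - (ν - 1) ^ p.2) / (p.2.factorial : ℝ))
            * iteratedDeriv p.2 (V14 t ν p.1) l
          = (((k - 1).factorial : ℝ) * l ^ (-(k : ℤ)))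
              * (((Polynomial.aeval ν (Polynomial.bernoulli p.1) : ℝ) / (p.1.factorial : ℝ))
                * (((-ν) ^ p.2 - (1 - ν) ^ p.2) / (p.2.factorial : ℝ))) := by
      intro p hp
      rw [iterV t ν l hl k hk p.1 p.2 (Finset.HasAntidiagonal.mem_antidiagonal.mp hp)]
      have hsign : ((-ν) ^ p.2 - (1 - ν) ^ p.2) = (-1) ^ p.2 * (ν ^ p.2 - (ν - 1) ^ p.2) := by
        have e1 : (-ν : ℝ) ^ p.2 = (-1) ^ p.2 * ν ^ p.2 := by rw [← neg_one_mul, mul_pow]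
        have e2 : ((1 : ℝ) - ν) ^ p.2 = (-1) ^ p.2 * (ν - 1) ^ p.2 := by
          rw [show (1 : ℝ) - ν = (-1) * (ν - 1) by ring, mul_pow]
        rw [e1, e2]
        ring
      rw [hsign]
      ring
    rw [Finset.sum_congr rfl h0, ← Finset.mul_sum, coreB ν (k + 1) (by omega), mul_zero]
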